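/- Decryption correctness of the BV* scheme: let q ≥ 2, A ∈ ℤ^{N×n}, t ∈ ℤⁿ, e ∈ ℤ^N, and let b ∈ ℤ^N satisfy b ≡ A·t + 2·e (mod q) entrywise. Let P = [b | −A] ∈ ℤ^{N×(n+1)} and s = (1, t) ∈ ℤ^{n+1}. For a message m ∈ {0,1}, a vector r ∈ {0,1}^N, and m̄ = (m, 0, …, 0) ∈ ℤ^{n+1}, the ciphertext c = Pᵀ·r + m̄ satisfies c · s ≡ m + 2·(e·r) (mod q); consequently, if |m + 2·(e·r)| < q/2, then ([c·s]_q) mod 2 = m. -/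

import Mathlib

private lemma bmod_eq_self_of_abs_lt {y : ℤ} {q : ℕ} (h : 2 * |y| < q) :
    Int.bmod y q = y := by
  have hq0 : 0 < (q : ℤ) := by
    have := abs_nonneg y; omega
  rw [Int.bmod_def]
  rcases le_or_gt 0 y with hy | hy
  · have habs := abs_of_nonneg hy
    have h1 : y % (q : ℤ) = y := Int.emod_eq_of_lt hy (by omega)
    rw [h1]; split <;> omega
  · have habs := abs_of_neg hy
    have h1 : y % (q : ℤ) = y + q := by
      have h2 : (y + (q : ℤ) * 1) % (q : ℤ) = y % q :=
        Int.add_mul_emod_self_left (a := y) (b := (q : ℤ)) (c := 1)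
      rw [mul_one] at h2
      rw [← h2]
      exact Int.emod_eq_of_lt (by omega) (by omega)
    rw [h1]; split <;> omega

private lemma bmod_congr_of_modeq {x y : ℤ} {q : ℕ} (h : x ≡ y [ZMOD (q : ℤ)]) :
    Int.bmod x q = Int.bmod y q := by
  rw [← Int.emod_bmod x, ← Int.emod_bmod y]
  exact congrArg (fun z => Int.bmod z q) h

/-- Decryption correctness of the BV* scheme: with public key `P = [b ∣ -A]`
(whose `k`-th row is `Fin.cons (b k) (-A k)`), secret key `s = (1, t)`, and
ciphertext `c = Pᵀ·r + (m, 0, …, 0)`, we have `c·s ≡ m + 2·(e·r) (mod q)`;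
consequently, if `|m + 2·(e·r)| < q/2`, then `([c·s]_q) mod 2 = m`.
Here `Int.bmod x q` is the representative of `x` modulo `q` in the symmetric
interval `[-q/2, q/2)`. -/
theorem bv_star_decryption_correct (q : ℕ) (hq : 2 ≤ q) (N n : ℕ)
    (A : Fin N → Fin n → ℤ) (t : Fin n → ℤ) (e b : Fin N → ℤ)
    (hb : ∀ k, b k ≡ (∑ j, A k j * t j) + 2 * e k [ZMOD (q : ℤ)])
    (m : ℤ) (hm : m = 0 ∨ m = 1)
    (r : Fin N → ℤ) (hr : ∀ k, r k = 0 ∨ r k = 1)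
    (c : Fin (n + 1) → ℤ)
    (hc : ∀ j, c j = (∑ k, (Fin.cons (b k) (fun j' => -A k j') : Fin (n + 1) → ℤ) j * r k)
      + (Fin.cons m (fun _ => 0) : Fin (n + 1) → ℤ) j) :
    (∑ j, c j * (Fin.cons 1 t : Fin (n + 1) → ℤ) j) ≡ m + 2 * ∑ k, e k * r k [ZMOD (q : ℤ)] ∧
    (((|m + 2 * ∑ k, e k * r k| : ℤ) : ℚ) < (q : ℚ) / 2 →
      (Int.bmod (∑ j, c j * (Fin.cons 1 t : Fin (n + 1) → ℤ) j) q) % 2 = m) := by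
  set S := ∑ j, c j * (Fin.cons 1 t : Fin (n + 1) → ℤ) j with hS
  set y := m + 2 * ∑ k, e k * r k with hy
  have key : S = m + ∑ k, (b k - ∑ j, A k j * t j) * r k := by
    rw [hS]
    simp only [hc]
    rw [Fin.sum_univ_succ]
    simp only [Fin.cons_zero, Fin.cons_succ, add_zero, mul_one]
    have swap : ∑ i : Fin n, (∑ k, -A k i * r k) * t i
        = ∑ k, (- ∑ j, A k j * t j) * r k := by
      calc ∑ i : Fin n, (∑ k, -A k i * r k) * t i
          = ∑ i : Fin n, ∑ k, -A k i * r k * t i := by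
            exact Finset.sum_congr rfl fun i _ => Finset.sum_mul ..
        _ = ∑ k, ∑ i : Fin n, -A k i * r k * t i := Finset.sum_comm
        _ = ∑ k, (- ∑ j, A k j * t j) * r k := by
            refine Finset.sum_congr rfl fun k _ => ?_
            rw [neg_mul, Finset.sum_mul, ← Finset.sum_neg_distrib]
            exact Finset.sum_congr rfl fun i _ => by ring
    rw [swap, add_right_comm, ← Finset.sum_add_distrib, add_comm]
    congr 1
    exact Finset.sum_congr rfl fun k _ => by ring
  have h1 : (q : ℤ) ∣ (∑ k, (b k - ∑ j, A k j * t j) * r k) - ∑ k, 2 * e k * r k := by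
    rw [← Finset.sum_sub_distrib]
    apply Finset.dvd_sum
    intro k _
    have hd : (q : ℤ) ∣ ((∑ j, A k j * t j) + 2 * e k) - b k := (hb k).dvd
    have : (b k - ∑ j, A k j * t j) * r k - 2 * e k * r k
        = -((((∑ j, A k j * t j) + 2 * e k) - b k) * r k) := by ring
    rw [this]
    exact dvd_neg.mpr (hd.mul_right _)
  have goal1 : S ≡ y [ZMOD (q : ℤ)] := by
    rw [key, hy]
    apply Int.ModEq.add_left m
    have h2 : 2 * ∑ k, e k * r k = ∑ k, 2 * e k * r k := by
      rw [Finset.mul_sum]; congr 1; ext k; ring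
    rw [h2]
    exact (Int.modEq_iff_dvd.mpr h1).symm
  refine ⟨goal1, fun habs => ?_⟩
  have habs' : 2 * |y| < (q : ℤ) := by
    have h3 : ((2 * |y| : ℤ) : ℚ) < (q : ℚ) := by
      push_cast
      push_cast at habs
      linarith
    exact_mod_cast h3
  have hbm : Int.bmod S q = y := by
    rw [bmod_congr_of_modeq goal1, bmod_eq_self_of_abs_lt habs']
  rw [hbm, hy]
  rcases hm with h | h <;> omega
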